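/- Let m ∈ ℕ with m ≥ 2, τ > 0, ε > 0, and α < 1. Then there exist a sequence (λ_k) of positive real numbers with λ_k → ∞ and a sequence of complex numbers (ω_k) with Re ω_k → +∞ such that ω_k^m + ε λ_k^α = −λ_k e^{−τ ω_k} for every k. -/

import Mathlib

open Filter

open Set Complex Topology
private lemma pow_polar (z : ℂ) (n : ℕ) :
    (z ^ n).im = ‖z‖ ^ n * Real.sin (n * Complex.arg z) ∧
    (z ^ n).re = ‖z‖ ^ n * Real.cos (n * Complex.arg z) := by
  have key : z ^ n = ((‖z‖ ^ n : ℝ) : ℂ)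
      * Complex.exp (((n : ℝ) * Complex.arg z : ℝ) * Complex.I) := by
    conv_lhs => rw [← Complex.norm_mul_exp_arg_mul_I z]
    rw [mul_pow, ← Complex.exp_nat_mul]
    push_cast
    ring_nf
  rw [key]
  constructor
  · rw [Complex.im_ofReal_mul, Complex.exp_ofReal_mul_I_im]
  · rw [Complex.re_ofReal_mul, Complex.exp_ofReal_mul_I_re]

set_option maxHeartbeats 2000000 in
private lemma exists_root (m : ℕ) (hm : 2 ≤ m) (τ ε α : ℝ)
    (hτ : 0 < τ) (hε : 0 < ε) (hα : α < 1) (x : ℝ)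
    (hx : 1 + (Real.pi / τ) / Real.sin (Real.pi / (2 * m)) ≤ x) :
    ∃ (l : ℝ) (ω : ℂ), 0 < l ∧ Real.pi / (2 * τ) * x ≤ l ∧ ω.re = x ∧
      ω ^ m + ((ε * l ^ α : ℝ) : ℂ) = -(l : ℂ) * Complex.exp (-(τ : ℂ) * ω) := by
  have hπ := Real.pi_pos
  have hmR : (2 : ℝ) ≤ (m : ℝ) := by exact_mod_cast hm
  set a : ℝ := Real.pi / (2 * τ) with ha_def
  set b : ℝ := Real.pi / τ with hb_def
  have ha : 0 < a := by positivity
  have hb : 0 < b := by positivity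
  have hab : a < b := by
    rw [ha_def, hb_def, div_lt_div_iff₀ (by positivity) hτ]
    nlinarith
  have hc : 0 < Real.sin (Real.pi / (2 * m)) := by
    apply Real.sin_pos_of_pos_of_lt_pi (by positivity)
    rw [div_lt_iff₀ (by positivity)]
    nlinarith
  have hx1 : 1 ≤ x := by
    have : 0 ≤ b / Real.sin (Real.pi / (2 * m)) := by positivity
    linarith
  have hx0 : 0 < x := by linarith
  have hxc : b / Real.sin (Real.pi / (2 * m)) ≤ x := by
    linarith
  -- key bounds on Im/Re of (x+iy)^m
  have hkey : ∀ y ∈ Icc a b,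
      y * x ^ (m - 1) ≤ (((x : ℂ) + (y : ℝ) * Complex.I) ^ m).im ∧
      0 ≤ (((x : ℂ) + (y : ℝ) * Complex.I) ^ m).re := by
    intro y hy
    obtain ⟨hy1, hy2⟩ := hy
    have hy0 : 0 < y := lt_of_lt_of_le ha hy1
    set z : ℂ := (x : ℂ) + (y : ℝ) * Complex.I with hzdef
    have hzre : z.re = x := by simp [hzdef]
    have hzim : z.im = y := by simp [hzdef]
    have hrepos : 0 < z.re := by rw [hzre]; exact hx0
    have hz0 : z ≠ 0 := by
      intro h; rw [h] at hrepos; simp at hrepos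
    have hr : x ≤ ‖z‖ := hzre ▸ Complex.re_le_norm z
    have hrpos : 0 < ‖z‖ := lt_of_lt_of_le hx0 hr
    set θ := Complex.arg z with hθdef
    have hθnn : 0 ≤ θ := Complex.arg_nonneg_iff.2 (by rw [hzim]; exact hy0.le)
    have hsinθ : Real.sin θ = y / ‖z‖ := by
      rw [hθdef, Complex.sin_arg, hzim]
    have hθlt : θ < Real.pi / 2 :=
      Complex.arg_lt_pi_div_two_iff.2 (Or.inl hrepos)
    have hθle : θ ≤ Real.pi / (2 * m) := by
      by_contra h
      push_neg at h
      have h0 : (0:ℝ) < Real.pi / (2 * (m:ℝ)) := by positivity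
      have hs1 : Real.sin (Real.pi / (2 * m)) < Real.sin θ :=
        Real.sin_lt_sin_of_lt_of_le_pi_div_two (by linarith) hθlt.le h
      have h2 : Real.sin θ ≤ b / x := by
        rw [hsinθ]
        exact div_le_div₀ hb.le hy2 hx0 hr
      have h3 : b / x ≤ Real.sin (Real.pi / (2 * m)) := by
        rw [div_le_iff₀ hx0]
        have := (div_le_iff₀ hc).1 hxc
        linarith [mul_comm x (Real.sin (Real.pi / (2 * m)))]
      linarith
    have hmθ : (m : ℝ) * θ ≤ Real.pi / 2 := by
      calc (m : ℝ) * θ ≤ (m : ℝ) * (Real.pi / (2 * m)) := by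
            exact mul_le_mul_of_nonneg_left hθle (by positivity)
        _ = Real.pi / 2 := by field_simp
    have hθm : θ ≤ (m : ℝ) * θ := le_mul_of_one_le_left hθnn (by linarith)
    obtain ⟨him, hre⟩ := pow_polar z m
    constructor
    · have hs1 : Real.sin θ ≤ Real.sin ((m : ℝ) * θ) :=
        Real.sin_le_sin_of_le_of_le_pi_div_two (by linarith) hmθ hθm
      have hpow : ‖z‖ ^ m = ‖z‖ ^ (m - 1) * ‖z‖ := by
        rw [← pow_succ]; congr 1; omega
      calc y * x ^ (m - 1) ≤ y * ‖z‖ ^ (m - 1) := by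
            exact mul_le_mul_of_nonneg_left (pow_le_pow_left₀ hx0.le hr _) hy0.le
        _ = ‖z‖ ^ m * (y / ‖z‖) := by
            rw [hpow]; field_simp
        _ = ‖z‖ ^ m * Real.sin θ := by rw [hsinθ]
        _ ≤ ‖z‖ ^ m * Real.sin ((m : ℝ) * θ) := by
            exact mul_le_mul_of_nonneg_left hs1 (by positivity)
        _ = (z ^ m).im := him.symm
    · rw [hre]
      exact mul_nonneg (by positivity)
        (Real.cos_nonneg_of_mem_Icc ⟨by nlinarith [mul_nonneg (Nat.cast_nonneg m : (0:ℝ) ≤ (m:ℝ)) hθnn], hmθ⟩)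
  -- function definitions
  set Imf : ℝ → ℝ := fun y => (((x : ℂ) + (y : ℝ) * Complex.I) ^ m).im with hImf_def
  set Ref : ℝ → ℝ := fun y => (((x : ℂ) + (y : ℝ) * Complex.I) ^ m).re with hRef_def
  set s : ℝ → ℝ := fun y => Real.sin (τ * y) with hs_def
  set E : ℝ := Real.exp (τ * x) with hE_def
  set lamf : ℝ → ℝ := fun y => Imf y * E / s y with hlamf_def
  set F : ℝ → ℝ := fun y => Ref y + ε * lamf y ^ α + Imf y * (Real.cos (τ * y) / s y)
    with hF_def
  have hEpos : 0 < E := Real.exp_pos _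
  have hE1 : 1 ≤ E := Real.one_le_exp (by positivity)
  have hτb : τ * b = Real.pi := by rw [hb_def]; field_simp
  have hτa : τ * a = Real.pi / 2 := by rw [ha_def]; field_simp
  have hspos : ∀ y ∈ Ico a b, 0 < s y := by
    intro y hy
    apply Real.sin_pos_of_pos_of_lt_pi
    · have := hy.1; nlinarith
    · calc τ * y < τ * b := by nlinarith [hy.2]
        _ = Real.pi := hτb
  have hsle : ∀ y : ℝ, s y ≤ 1 := fun y => Real.sin_le_one _
  have hIm_pos : ∀ y ∈ Icc a b, 0 < Imf y := by
    intro y hy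
    have h1 := (hkey y hy).1
    have h2 : 0 < y * x ^ (m - 1) :=
      mul_pos (lt_of_lt_of_le ha hy.1) (pow_pos hx0 _)
    linarith
  have hlam_pos : ∀ y ∈ Ico a b, 0 < lamf y := fun y hy =>
    div_pos (mul_pos (hIm_pos y ⟨hy.1, hy.2.le⟩) hEpos) (hspos y hy)
  have hamem : a ∈ Ico a b := ⟨le_refl a, hab⟩
  have hFa : 0 < F a := by
    have hcosa : Real.cos (τ * a) = 0 := by rw [hτa, Real.cos_pi_div_two]
    have h1 : 0 < ε * lamf a ^ α :=
      mul_pos hε (Real.rpow_pos_of_pos (hlam_pos a hamem) α)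
    have h2 : 0 ≤ Ref a := (hkey a ⟨le_refl a, hab.le⟩).2
    have h3 : F a = Ref a + ε * lamf a ^ α + Imf a * (Real.cos (τ * a) / s a) := rfl
    rw [h3, hcosa]
    simp only [zero_div, mul_zero, add_zero]
    linarith
  -- the limit at b
  have hL : (𝓝[Ico a b] b).NeBot := by
    apply mem_closure_iff_nhdsWithin_neBot.1
    rw [closure_Ico hab.ne]
    exact ⟨hab.le, le_refl b⟩
  have hs_cont : Continuous s := Real.continuous_sin.comp (continuous_const.mul continuous_id)
  have hsb : s b = 0 := by
    have : s b = Real.sin (τ * b) := rfl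
    rw [this, hτb, Real.sin_pi]
  have hs_tend0 : Tendsto s (𝓝[Ico a b] b) (𝓝 0) := by
    have h2 : Tendsto s (𝓝[Ico a b] b) (𝓝 (s b)) :=
      (hs_cont.tendsto b).mono_left nhdsWithin_le_nhds
    rwa [hsb] at h2
  have hs_tendIoi : Tendsto s (𝓝[Ico a b] b) (𝓝[>] 0) :=
    tendsto_nhdsWithin_of_tendsto_nhds_of_eventually_within _ hs_tend0
      (eventually_mem_nhdsWithin.mono fun y hy => hspos y hy)
  have hinv : Tendsto (fun y => (s y)⁻¹) (𝓝[Ico a b] b) atTop :=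
    tendsto_inv_nhdsGT_zero.comp hs_tendIoi
  set G : ℝ → ℝ := fun y => ε * (Imf y * E) ^ α * s y ^ (1 - α)
      + Imf y * Real.cos (τ * y) with hG_def
  have hImf_cont : Continuous Imf :=
    Complex.continuous_im.comp
      ((continuous_const.add (Complex.continuous_ofReal.mul continuous_const)).pow m)
  have hRef_cont : Continuous Ref :=
    Complex.continuous_re.comp
      ((continuous_const.add (Complex.continuous_ofReal.mul continuous_const)).pow m)
  have hImfb_pos : 0 < Imf b := hIm_pos b ⟨hab.le, le_refl b⟩
  have hGtend : Tendsto G (𝓝[Ico a b] b) (𝓝 (-(Imf b))) := by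
    have t1 : Tendsto (fun y => Imf y * E) (𝓝[Ico a b] b) (𝓝 (Imf b * E)) :=
      ((hImf_cont.mul continuous_const).tendsto b).mono_left nhdsWithin_le_nhds
    have t2 : Tendsto (fun y => (Imf y * E) ^ α) (𝓝[Ico a b] b) (𝓝 ((Imf b * E) ^ α)) :=
      (Real.continuousAt_rpow_const _ α (Or.inl (by positivity : (0:ℝ) < Imf b * E).ne')).tendsto.comp t1
    have t3 : Tendsto (fun y => s y ^ (1 - α)) (𝓝[Ico a b] b) (𝓝 0) := by
      have c0 : ContinuousAt (fun t : ℝ => t ^ (1 - α)) 0 :=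
        Real.continuousAt_rpow_const 0 (1 - α) (Or.inr (by linarith))
      have h4 := c0.tendsto.comp hs_tend0
      rwa [Real.zero_rpow (by linarith : (1:ℝ) - α ≠ 0)] at h4
    have t4 : Tendsto (fun y => Imf y * Real.cos (τ * y)) (𝓝[Ico a b] b)
        (𝓝 (Imf b * Real.cos (τ * b))) :=
      ((hImf_cont.mul (Real.continuous_cos.comp (continuous_const.mul continuous_id))).tendsto b).mono_left nhdsWithin_le_nhds
    have h5 : Tendsto (fun y => ε * (Imf y * E) ^ α * s y ^ (1 - α)
          + Imf y * Real.cos (τ * y)) (𝓝[Ico a b] b)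
        (𝓝 (ε * (Imf b * E) ^ α * 0 + Imf b * Real.cos (τ * b))) :=
      ((tendsto_const_nhds.mul t2).mul t3).add t4
    have h6 : ε * (Imf b * E) ^ α * 0 + Imf b * Real.cos (τ * b) = -(Imf b) := by
      rw [hτb, Real.cos_pi]; ring
    rwa [h6] at h5
  have hFeq : ∀ᶠ y in 𝓝[Ico a b] b, F y = Ref y + (s y)⁻¹ * G y := by
    filter_upwards [eventually_mem_nhdsWithin] with y hy
    have hs0 := hspos y hy
    have hIm0 := hIm_pos y ⟨hy.1, hy.2.le⟩
    have h1 : s y ^ (1 - α) = s y / s y ^ α := by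
      rw [Real.rpow_sub hs0, Real.rpow_one]
    have h2 : lamf y ^ α = (Imf y * E) ^ α / s y ^ α :=
      Real.div_rpow (by positivity) hs0.le α
    have hsα : 0 < s y ^ α := Real.rpow_pos_of_pos hs0 α
    have h3 : F y = Ref y + ε * lamf y ^ α + Imf y * (Real.cos (τ * y) / s y) := rfl
    have h4 : G y = ε * (Imf y * E) ^ α * s y ^ (1 - α) + Imf y * Real.cos (τ * y) := rfl
    have alg : ∀ R Iv c sy sα Eα : ℝ, sy ≠ 0 → sα ≠ 0 →
        R + ε * (Eα / sα) + Iv * (c / sy) = R + sy⁻¹ * (ε * Eα * (sy / sα) + Iv * c) := by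
      intros R Iv c sy sα Eα h₁ h₂
      field_simp
      ring
    rw [h3, h4, h2, h1]
    exact alg _ _ _ _ _ _ hs0.ne' hsα.ne'
  have hFbot : Tendsto F (𝓝[Ico a b] b) atBot := by
    have h := Filter.Tendsto.atTop_mul_neg (by linarith : -(Imf b) < 0) hinv hGtend
    have h2 : Tendsto (fun y => Ref y + (s y)⁻¹ * G y) (𝓝[Ico a b] b) atBot :=
      Filter.Tendsto.add_atBot
        ((hRef_cont.tendsto b).mono_left (nhdsWithin_le_nhds : 𝓝[Ico a b] b ≤ 𝓝 b)) h
    exact Filter.Tendsto.congr' (Filter.EventuallyEq.symm hFeq) h2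
  obtain ⟨y₁, hy₁neg, hy₁mem⟩ :=
    ((hFbot.eventually (eventually_lt_atBot 0)).and eventually_mem_nhdsWithin).exists
  have hsub : Icc a y₁ ⊆ Ico a b := fun y hy => ⟨hy.1, lt_of_le_of_lt hy.2 hy₁mem.2⟩
  have hsne : ∀ y ∈ Icc a y₁, s y ≠ 0 := fun y hy => (hspos y (hsub hy)).ne'
  have hFcont : ContinuousOn F (Icc a y₁) := by
    apply ContinuousOn.add
    apply ContinuousOn.add
    · exact hRef_cont.continuousOn
    · apply continuousOn_const.mul
      apply ContinuousOn.rpow_const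
      · exact ((hImf_cont.mul continuous_const).continuousOn).div hs_cont.continuousOn hsne
      · intro y hy; exact Or.inl (hlam_pos y (hsub hy)).ne'
    · exact hImf_cont.continuousOn.mul
        (((Real.continuous_cos.comp (continuous_const.mul continuous_id)).continuousOn).div
          hs_cont.continuousOn hsne)
  have h0mem : (0:ℝ) ∈ Icc (F y₁) (F a) := ⟨hy₁neg.le, hFa.le⟩
  obtain ⟨y₂, hy₂mem, hy₂F⟩ := intermediate_value_Icc' hy₁mem.1 hFcont h0mem
  have hy₂' : y₂ ∈ Ico a b := hsub hy₂mem
  have hs2 : 0 < s y₂ := hspos y₂ hy₂'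
  have hIm2pos : 0 < Imf y₂ := hIm_pos y₂ ⟨hy₂'.1, hy₂'.2.le⟩
  refine ⟨lamf y₂, (x : ℂ) + (y₂ : ℝ) * Complex.I, hlam_pos y₂ hy₂', ?_, by simp, ?_⟩
  · have hIm2 := (hkey y₂ ⟨hy₂'.1, hy₂'.2.le⟩).1
    have hxpow : x ≤ x ^ (m - 1) := by
      calc x = x ^ 1 := (pow_one x).symm
        _ ≤ x ^ (m - 1) := pow_le_pow_right₀ hx1 (by omega)
    have h1 : a * x ≤ y₂ * x ^ (m - 1) :=
      mul_le_mul hy₂'.1 hxpow hx0.le (le_trans ha.le hy₂'.1)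
    have h3 : Imf y₂ ≤ Imf y₂ * E := le_mul_of_one_le_right hIm2pos.le hE1
    have h4 : Imf y₂ * E ≤ lamf y₂ := by
      have h5 : lamf y₂ = Imf y₂ * E / s y₂ := rfl
      rw [h5, le_div_iff₀ hs2]
      exact mul_le_of_le_one_right (by positivity) (hsle y₂)
    linarith
  · -- the characteristic equation
    set l := lamf y₂ with hl_def
    have hlpos : 0 < l := hlam_pos y₂ hy₂'
    have hlexp : l * Real.exp (-(τ * x)) = Imf y₂ / s y₂ := by
      have h5 : l = Imf y₂ * E / s y₂ := rfl
      rw [h5, Real.exp_neg, hE_def]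
      field_simp
    have keyim : l * (Real.exp (-(τ * x)) * Real.sin (τ * y₂)) = Imf y₂ := by
      have : l * (Real.exp (-(τ * x)) * Real.sin (τ * y₂))
          = l * Real.exp (-(τ * x)) * s y₂ := by
        have : s y₂ = Real.sin (τ * y₂) := rfl
        rw [this]; ring
      rw [this, hlexp]
      field_simp
    have keyre : Ref y₂ + ε * l ^ α
        = -(l * (Real.exp (-(τ * x)) * Real.cos (τ * y₂))) := by
      have h6 : Ref y₂ + ε * l ^ α + Imf y₂ * (Real.cos (τ * y₂) / s y₂) = 0 := hy₂F
      have h7 : l * (Real.exp (-(τ * x)) * Real.cos (τ * y₂))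
          = l * Real.exp (-(τ * x)) * Real.cos (τ * y₂) := by ring
      rw [h7, hlexp]
      have h8 : Imf y₂ / s y₂ * Real.cos (τ * y₂)
          = Imf y₂ * (Real.cos (τ * y₂) / s y₂) := by ring
      rw [h8]
      linarith
    have hwre : ((-(τ:ℂ)) * ((x:ℂ) + (y₂:ℝ) * Complex.I)).re = -(τ * x) := by
      simp
    have hwim : ((-(τ:ℂ)) * ((x:ℂ) + (y₂:ℝ) * Complex.I)).im = -(τ * y₂) := by
      simp
    have hnl : -(l : ℂ) = ((-l : ℝ) : ℂ) := by push_cast; ring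
    apply Complex.ext
    · have hRe : ((((x : ℂ) + (y₂ : ℝ) * Complex.I) ^ m)).re = Ref y₂ := rfl
      have hL : ((((x : ℂ) + (y₂ : ℝ) * Complex.I) ^ m) + ((ε * l ^ α : ℝ) : ℂ)).re
          = Ref y₂ + ε * l ^ α := by
        rw [Complex.add_re, Complex.ofReal_re, hRe]
      rw [hL, hnl, Complex.re_ofReal_mul, Complex.exp_re, hwre, hwim, Real.cos_neg]
      rw [keyre]; ring
    · have hIm : ((((x : ℂ) + (y₂ : ℝ) * Complex.I) ^ m)).im = Imf y₂ := rfl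
      have hL : ((((x : ℂ) + (y₂ : ℝ) * Complex.I) ^ m) + ((ε * l ^ α : ℝ) : ℂ)).im
          = Imf y₂ := by
        rw [Complex.add_im, Complex.ofReal_im, hIm, add_zero]
      rw [hL, hnl, Complex.im_ofReal_mul, Complex.exp_im, hwre, hwim, Real.sin_neg]
      rw [← keyim]; ring


/-- Ill-posedness for the `m`-th order (`m ≥ 2`) lower-order regularized delay equation:
there are eigenvalues `λ_k → ∞` and characteristic roots `ω_k` with `Re ω_k → ∞`
satisfying `ω_k^m + ε λ_k^α = -λ_k e^{-τ ω_k}`. -/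
theorem higher_order_illposedness (m : ℕ) (hm : 2 ≤ m) (τ ε α : ℝ)
    (hτ : 0 < τ) (hε : 0 < ε) (hα : α < 1) :
    ∃ (lam : ℕ → ℝ) (ω : ℕ → ℂ),
      (∀ k, 0 < lam k) ∧
      Tendsto lam atTop atTop ∧
      Tendsto (fun k => (ω k).re) atTop atTop ∧
      ∀ k, ω k ^ m + ((ε * lam k ^ α : ℝ) : ℂ)
        = -(lam k : ℂ) * Complex.exp (-(τ : ℂ) * ω k) := by
  set X : ℝ := 1 + (Real.pi / τ) / Real.sin (Real.pi / (2 * m)) with hX_def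
  have H : ∀ k : ℕ, ∃ (l : ℝ) (ω : ℂ), 0 < l ∧ Real.pi / (2 * τ) * (X + k) ≤ l ∧
      ω.re = X + k ∧
      ω ^ m + ((ε * l ^ α : ℝ) : ℂ) = -(l : ℂ) * Complex.exp (-(τ : ℂ) * ω) := by
    intro k
    exact exists_root m hm τ ε α hτ hε hα (X + k)
      (le_add_of_nonneg_right (Nat.cast_nonneg k))
  choose lam ω h1 h2 h3 h4 using H
  have hbase : Tendsto (fun k : ℕ => X + (k : ℝ)) atTop atTop :=
    tendsto_atTop_add_const_left _ X tendsto_natCast_atTop_atTop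
  refine ⟨lam, ω, h1, ?_, ?_, h4⟩
  · have hpos : (0:ℝ) < Real.pi / (2 * τ) := by positivity
    exact tendsto_atTop_mono h2 (hbase.const_mul_atTop hpos)
  · have : (fun k : ℕ => (ω k).re) = fun k : ℕ => X + (k : ℝ) := funext h3
    rw [this]
    exact hbase
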